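/- Let Ŵ : ℤ → ℝ and k_max ∈ ℤ satisfy Ŵ(k_max) > 0 and Ŵ(k) ≤ Ŵ(k_max) for all k, and set α* = 1/Ŵ(k_max). Let û : ℤ → ℂ be square-summable with û(k_max) ≠ 0 (input aligned with the leading mode). For α ∈ (0, α*), define the steady-state response ẑ_α(k) = û(k)/(1 − α Ŵ(k)). Then: (i) 1 − α Ŵ(k) ≥ 1 − α Ŵ(k_max) > 0 for all k, so ẑ_α is square-summable; and (ii) the ℓ²-norm (Σ_k |ẑ_α(k)|²)^{1/2} tends to +∞ as α → α* from below. -/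

import Mathlib

open Filter

set_option maxHeartbeats 1000000 in
lemma aligned_aux
    (What : ℤ → ℝ) (kmax : ℤ)
    (hpos : 0 < What kmax) (hmax : ∀ k, What k ≤ What kmax)
    (uhat : ℤ → ℂ) (hu : Summable fun k => ‖uhat k‖ ^ 2)
    (α : ℝ) (hα : α ∈ Set.Ioo (0 : ℝ) (1 / What kmax)) :
    (∀ k : ℤ, 1 - α * What kmax ≤ 1 - α * What k) ∧
        0 < 1 - α * What kmax ∧
        Summable fun k => ‖uhat k / ((1 - α * What k : ℝ) : ℂ)‖ ^ 2 := by
  obtain ⟨hα0, hα1⟩ := hα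
  have hkey : ∀ k : ℤ, 1 - α * What kmax ≤ 1 - α * What k := by
    intro k
    have := mul_le_mul_of_nonneg_left (hmax k) hα0.le
    linarith
  have hden : 0 < 1 - α * What kmax := by
    have := (lt_div_iff₀ hpos).mp hα1
    linarith
  refine ⟨hkey, hden, ?_⟩
  refine Summable.of_nonneg_of_le (fun k => by positivity) ?_ (hu.mul_left ((1 - α * What kmax)⁻¹ ^ 2))
  · intro k
    have hdk : 0 < 1 - α * What k := lt_of_lt_of_le hden (hkey k)
    rw [norm_div, div_pow, Complex.norm_real, Real.norm_of_nonneg hdk.le]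
    rw [div_eq_inv_mul, ← inv_pow]
    gcongr (?_)^2 * _
    exact inv_anti₀ hden (hkey k)

theorem aligned_input_amplified_near_bifurcation
    (What : ℤ → ℝ) (kmax : ℤ)
    (hpos : 0 < What kmax) (hmax : ∀ k, What k ≤ What kmax)
    (uhat : ℤ → ℂ) (hu : Summable fun k => ‖uhat k‖ ^ 2)
    (halign : uhat kmax ≠ 0) :
    (∀ α ∈ Set.Ioo (0 : ℝ) (1 / What kmax),
        (∀ k : ℤ, 1 - α * What kmax ≤ 1 - α * What k) ∧
        0 < 1 - α * What kmax ∧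
        Summable fun k => ‖uhat k / ((1 - α * What k : ℝ) : ℂ)‖ ^ 2) ∧
    Tendsto
      (fun α : ℝ =>
        Real.sqrt (∑' k : ℤ, ‖uhat k / ((1 - α * What k : ℝ) : ℂ)‖ ^ 2))
      (nhdsWithin (1 / What kmax) (Set.Iio (1 / What kmax))) atTop := by
  refine ⟨fun α hα => aligned_aux What kmax hpos hmax uhat hu α hα, ?_⟩
  set αs : ℝ := 1 / What kmax with hαs
  have hαspos : 0 < αs := by positivity
  -- lower bound function
  have hlow : Tendsto (fun α : ℝ => ‖uhat kmax‖ / (1 - α * What kmax))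
      (nhdsWithin αs (Set.Iio αs)) atTop := by
    have h1 : Tendsto (fun α : ℝ => 1 - α * What kmax)
        (nhdsWithin αs (Set.Iio αs)) (nhdsWithin 0 (Set.Ioi 0)) := by
      apply tendsto_nhdsWithin_of_tendsto_nhds_of_eventually_within
      · have : Tendsto (fun α : ℝ => 1 - α * What kmax) (nhds αs)
            (nhds (1 - αs * What kmax)) := by
          exact (tendsto_const_nhds.sub ((continuous_id.mul continuous_const).tendsto αs))
        have heq : 1 - αs * What kmax = 0 := by
          rw [hαs, one_div, inv_mul_cancel₀ hpos.ne']; ring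
        rw [heq] at this
        exact this.mono_left nhdsWithin_le_nhds
      · filter_upwards [self_mem_nhdsWithin] with α (hα : α < αs)
        have : α * What kmax < αs * What kmax := by
          exact mul_lt_mul_of_pos_right hα hpos
        have heq : αs * What kmax = 1 := by rw [hαs, one_div, inv_mul_cancel₀ hpos.ne']
        simp only [Set.mem_Ioi]
        linarith
    have h2 : Tendsto (fun α : ℝ => (1 - α * What kmax)⁻¹)
        (nhdsWithin αs (Set.Iio αs)) atTop := h1.inv_tendsto_nhdsGT_zero
    have h3 := h2.const_mul_atTop (norm_pos_iff.mpr halign)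
    simpa [div_eq_mul_inv] using h3
  apply tendsto_atTop_mono' _ _ hlow
  filter_upwards [Ioo_mem_nhdsLT_of_mem (Set.mem_Ioc.mpr ⟨hαspos, le_refl αs⟩)]
    with α hα
  obtain ⟨_, hden, hsum⟩ := aligned_aux What kmax hpos hmax uhat hu α hα
  have hterm : ‖uhat kmax / ((1 - α * What kmax : ℝ) : ℂ)‖ ^ 2 ≤
      ∑' k : ℤ, ‖uhat k / ((1 - α * What k : ℝ) : ℂ)‖ ^ 2 :=
    Summable.le_tsum hsum kmax (fun k _ => by positivity)
  calc ‖uhat kmax‖ / (1 - α * What kmax)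
      = Real.sqrt (‖uhat kmax / ((1 - α * What kmax : ℝ) : ℂ)‖ ^ 2) := by
        rw [Real.sqrt_sq (by positivity), norm_div, Complex.norm_real,
          Real.norm_of_nonneg hden.le]
    _ ≤ _ := Real.sqrt_le_sqrt hterm
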